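/- Let p, q : ℝ² → ℝ and let φ₁, φ₂, ψ₁, ψ₂ : ℝ² → ℂ be differentiable functions satisfying, for all (x,y) ∈ ℝ², ∂φ₁/∂y = p·ψ₁, ∂ψ₁/∂x = q·φ₁, ∂φ₂/∂y = q·ψ₂, ∂ψ₂/∂x = p·φ₂. Define E₁, E₂ : ℝ² → ℝ⁴ by E₁ = (Re(φ₁φ₂), −Im(φ₁φ₂), Re(φ₁·conj(φ₂)), −Im(φ₁·conj(φ₂))) and E₂ by the same formulas with ψ₁, ψ₂ in place of φ₁, φ₂. Then: (a) for all (x,y), ∂E₁/∂y (x,y) = ∂E₂/∂x (x,y), i.e. the ℝ⁴-valued 1-form E₁ dx + E₂ dy is closed; and (b) Q(E₁(x,y)) = 0 and Q(E₂(x,y)) = 0 for all (x,y), where Q(v) = v₁² + v₂² − v₃² − v₄². -/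

import Mathlib

noncomputable def Lmap : (ℂ × ℂ) →L[ℝ] ℝ × ℝ × ℝ × ℝ :=
  (Complex.reCLM.comp (ContinuousLinearMap.fst ℝ ℂ ℂ)).prod
    (((-Complex.imCLM).comp (ContinuousLinearMap.fst ℝ ℂ ℂ)).prod
      ((Complex.reCLM.comp (ContinuousLinearMap.snd ℝ ℂ ℂ)).prod
        ((-Complex.imCLM).comp (ContinuousLinearMap.snd ℝ ℂ ℂ))))

@[simp] lemma Lmap_apply (z w : ℂ) : Lmap (z, w) = (z.re, -z.im, w.re, -w.im) := rfl

lemma mul_fderiv_apply (f g : ℝ × ℝ → ℂ) (hf : Differentiable ℝ f) (hg : Differentiable ℝ g)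
    (v w : ℝ × ℝ) :
    fderiv ℝ (fun u => f u * g u) v w = f v * fderiv ℝ g v w + g v * fderiv ℝ f v w := by
  rw [fderiv_fun_mul (hf v) (hg v)]
  simp [smul_eq_mul]

lemma conj_fderiv_apply (f : ℝ × ℝ → ℂ) (v w : ℝ × ℝ) :
    fderiv ℝ (fun u => (starRingEnd ℂ) (f u)) v w = (starRingEnd ℂ) (fderiv ℝ f v w) := by
  have : (fun u => (starRingEnd ℂ) (f u)) = ⇑Complex.conjCLE ∘ f := rfl
  rw [this, ContinuousLinearEquiv.comp_fderiv]
  rfl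

lemma conj_diff (f : ℝ × ℝ → ℂ) (hf : Differentiable ℝ f) :
    Differentiable ℝ (fun u => (starRingEnd ℂ) (f u)) :=
  Complex.conjCLE.differentiable.comp hf

theorem weierstrass_R22_closed_isotropic
    (p q : ℝ × ℝ → ℝ) (φ₁ φ₂ ψ₁ ψ₂ : ℝ × ℝ → ℂ)
    (hφ₁diff : Differentiable ℝ φ₁) (hφ₂diff : Differentiable ℝ φ₂)
    (hψ₁diff : Differentiable ℝ ψ₁) (hψ₂diff : Differentiable ℝ ψ₂)
    (hφ₁ : ∀ x y : ℝ, fderiv ℝ φ₁ (x, y) (0, 1) = (p (x, y) : ℂ) * ψ₁ (x, y))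
    (hψ₁ : ∀ x y : ℝ, fderiv ℝ ψ₁ (x, y) (1, 0) = (q (x, y) : ℂ) * φ₁ (x, y))
    (hφ₂ : ∀ x y : ℝ, fderiv ℝ φ₂ (x, y) (0, 1) = (q (x, y) : ℂ) * ψ₂ (x, y))
    (hψ₂ : ∀ x y : ℝ, fderiv ℝ ψ₂ (x, y) (1, 0) = (p (x, y) : ℂ) * φ₂ (x, y))
    (E₁ E₂ : ℝ × ℝ → ℝ × ℝ × ℝ × ℝ)
    (hE₁ : ∀ x y : ℝ, E₁ (x, y) =
      ((φ₁ (x, y) * φ₂ (x, y)).re, -(φ₁ (x, y) * φ₂ (x, y)).im,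
       (φ₁ (x, y) * (starRingEnd ℂ) (φ₂ (x, y))).re,
       -(φ₁ (x, y) * (starRingEnd ℂ) (φ₂ (x, y))).im))
    (hE₂ : ∀ x y : ℝ, E₂ (x, y) =
      ((ψ₁ (x, y) * ψ₂ (x, y)).re, -(ψ₁ (x, y) * ψ₂ (x, y)).im,
       (ψ₁ (x, y) * (starRingEnd ℂ) (ψ₂ (x, y))).re,
       -(ψ₁ (x, y) * (starRingEnd ℂ) (ψ₂ (x, y))).im)) :
    ∀ x y : ℝ,
      fderiv ℝ E₁ (x, y) (0, 1) = fderiv ℝ E₂ (x, y) (1, 0) ∧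
      (E₁ (x, y)).1 ^ 2 + (E₁ (x, y)).2.1 ^ 2 - (E₁ (x, y)).2.2.1 ^ 2
        - (E₁ (x, y)).2.2.2 ^ 2 = 0 ∧
      (E₂ (x, y)).1 ^ 2 + (E₂ (x, y)).2.1 ^ 2 - (E₂ (x, y)).2.2.1 ^ 2
        - (E₂ (x, y)).2.2.2 ^ 2 = 0 := by
  intro x y
  set v : ℝ × ℝ := (x, y) with hv
  -- differentiability facts
  have hcφ₂ := conj_diff φ₂ hφ₂diff
  have hcψ₂ := conj_diff ψ₂ hψ₂diff
  have hG₁a : Differentiable ℝ (fun u => φ₁ u * φ₂ u) := hφ₁diff.mul hφ₂diff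
  have hG₁b : Differentiable ℝ (fun u => φ₁ u * (starRingEnd ℂ) (φ₂ u)) := hφ₁diff.mul hcφ₂
  have hG₂a : Differentiable ℝ (fun u => ψ₁ u * ψ₂ u) := hψ₁diff.mul hψ₂diff
  have hG₂b : Differentiable ℝ (fun u => ψ₁ u * (starRingEnd ℂ) (ψ₂ u)) := hψ₁diff.mul hcψ₂
  refine ⟨?_, ?_, ?_⟩
  · -- closedness
    have hE₁eq : E₁ = ⇑Lmap ∘ (fun u => (φ₁ u * φ₂ u, φ₁ u * (starRingEnd ℂ) (φ₂ u))) := by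
      funext u
      obtain ⟨a, b⟩ := u
      rw [hE₁ a b]
      rfl
    have hE₂eq : E₂ = ⇑Lmap ∘ (fun u => (ψ₁ u * ψ₂ u, ψ₁ u * (starRingEnd ℂ) (ψ₂ u))) := by
      funext u
      obtain ⟨a, b⟩ := u
      rw [hE₂ a b]
      rfl
    have hD₁ : HasFDerivAt (fun u => (φ₁ u * φ₂ u, φ₁ u * (starRingEnd ℂ) (φ₂ u)))
        ((fderiv ℝ (fun u => φ₁ u * φ₂ u) v).prod
          (fderiv ℝ (fun u => φ₁ u * (starRingEnd ℂ) (φ₂ u)) v)) v :=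
      HasFDerivAt.prodMk ((hG₁a v).hasFDerivAt) ((hG₁b v).hasFDerivAt)
    have hD₂ : HasFDerivAt (fun u => (ψ₁ u * ψ₂ u, ψ₁ u * (starRingEnd ℂ) (ψ₂ u)))
        ((fderiv ℝ (fun u => ψ₁ u * ψ₂ u) v).prod
          (fderiv ℝ (fun u => ψ₁ u * (starRingEnd ℂ) (ψ₂ u)) v)) v :=
      HasFDerivAt.prodMk ((hG₂a v).hasFDerivAt) ((hG₂b v).hasFDerivAt)
    have hc₁ := (Lmap.hasFDerivAt.comp v hD₁).fderiv
    have hc₂ := (Lmap.hasFDerivAt.comp v hD₂).fderiv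
    rw [hE₁eq, hE₂eq, hc₁, hc₂]
    have key1 : fderiv ℝ (fun u => φ₁ u * φ₂ u) v (0, 1)
        = fderiv ℝ (fun u => ψ₁ u * ψ₂ u) v (1, 0) := by
      rw [mul_fderiv_apply φ₁ φ₂ hφ₁diff hφ₂diff, mul_fderiv_apply ψ₁ ψ₂ hψ₁diff hψ₂diff,
        hφ₁ x y, hφ₂ x y, hψ₁ x y, hψ₂ x y]
      ring
    have key2 : fderiv ℝ (fun u => φ₁ u * (starRingEnd ℂ) (φ₂ u)) v (0, 1)
        = fderiv ℝ (fun u => ψ₁ u * (starRingEnd ℂ) (ψ₂ u)) v (1, 0) := by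
      rw [mul_fderiv_apply φ₁ _ hφ₁diff hcφ₂, mul_fderiv_apply ψ₁ _ hψ₁diff hcψ₂,
        conj_fderiv_apply, conj_fderiv_apply, hφ₁ x y, hφ₂ x y, hψ₁ x y, hψ₂ x y,
        map_mul, map_mul, Complex.conj_ofReal, Complex.conj_ofReal]
      ring
    simp only [ContinuousLinearMap.coe_comp', Function.comp_apply,
      ContinuousLinearMap.prod_apply, key1, key2]
  · rw [hE₁ x y]
    simp only [Complex.mul_re, Complex.mul_im, Complex.conj_re, Complex.conj_im]
    ring
  · rw [hE₂ x y]
    simp only [Complex.mul_re, Complex.mul_im, Complex.conj_re, Complex.conj_im]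
    ring
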